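/- Let u, v be distinct binary words of length n with v ∉ {0^n, 1^n} and D_1(v) ⊆ D_1(u). Then there exist p, q with {p,q} = {0,1} and a positive integer m with 1 ≤ m ≤ n−1 such that v = p^m q^{n−m} and u = p^{m−1} q p q^{n−m−1}. -/

import Mathlib

/-- The set of subsequences of `u` of length `u.length - t`. -/
def Dset (t : ℕ) (u : List Bool) : Set (List Bool) :=
  {w | w.Sublist u ∧ w.length = u.length - t}

private lemma cons_sublist_cons_of_ne {a b : Bool} {l t : List Bool}
    (h : (a :: l).Sublist (b :: t)) (hab : a ≠ b) : (a :: l).Sublist t := by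
  cases h with
  | cons _ h => exact h
  | cons_cons _ h => exact absurd rfl hab

private lemma rep_of_tail_eq_dropLast :
    ∀ (l : List Bool), l.tail = l.dropLast → l = List.replicate l.length l.headI
  | [], _ => rfl
  | [x], _ => rfl
  | x :: y :: t, h => by
      have hd : (x :: y :: t).dropLast = x :: (y :: t).dropLast := rfl
      rw [hd] at h
      have hxy : y = x := (List.cons.injEq _ _ _ _ ▸ h).1
      have ht : (y :: t).tail = (y :: t).dropLast := by
        subst hxy
        exact (List.cons.injEq _ _ _ _ ▸ h).2
      subst hxy
      have ih' : y :: t = List.replicate (y :: t).length y := by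
        simpa using rep_of_tail_eq_dropLast (y :: t) ht
      show y :: y :: t = List.replicate ((y :: t).length + 1) y
      rw [List.replicate_succ, ← ih']

set_option maxHeartbeats 1000000 in
theorem one_dominant_classification (n : ℕ) (u v : List Bool)
    (hu : u.length = n) (hv : v.length = n) (hne : u ≠ v)
    (hv0 : v ≠ List.replicate n false) (hv1 : v ≠ List.replicate n true)
    (hdom : Dset 1 v ⊆ Dset 1 u) :
    ∃ (p q : Bool) (m : ℕ), p ≠ q ∧ 1 ≤ m ∧ m ≤ n - 1 ∧
      v = List.replicate m p ++ List.replicate (n - m) q ∧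
      u = List.replicate (m - 1) p ++ [q, p] ++ List.replicate (n - m - 1) q := by
  induction n generalizing u v with
  | zero =>
      exact absurd (List.length_eq_zero_iff.mp hv) (by simpa using hv0)
  | succ n ih =>
    obtain ⟨a, v', rfl⟩ := List.exists_cons_of_ne_nil
      (by intro h; rw [h] at hv; simp at hv : v ≠ [])
    obtain ⟨b, u', rfl⟩ := List.exists_cons_of_ne_nil
      (by intro h; rw [h] at hu; simp at hu : u ≠ [])
    have hv' : v'.length = n := by simpa using hv
    have hu' : u'.length = n := by simpa using hu
    rcases Nat.eq_zero_or_pos n with rfl | hn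
    · have hv0' : v' = [] := List.length_eq_zero_iff.mp hv'
      subst hv0'
      cases a
      · simp at hv0
      · simp at hv1
    have hmem : ∀ w : List Bool, w.Sublist (a :: v') → w.length = n → w.Sublist (b :: u') := by
      intro w hw hl
      exact (hdom ⟨hw, by simp [hl, hv']⟩).1
    by_cases hab : a = b
    · subst hab
      by_cases h0 : v' = List.replicate n false
      · -- v' constant false
        cases a with
        | false => exact absurd (by rw [h0]; rfl) hv0
        | true =>
          exfalso
          have hsub : v'.Sublist (true :: u') := hmem v' (List.sublist_cons_self _ _) hv'
          obtain ⟨k, rfl⟩ : ∃ k, n = k + 1 := ⟨n - 1, by omega⟩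
          rw [h0, List.replicate_succ] at hsub
          have hsub' := cons_sublist_cons_of_ne hsub (by simp)
          have heq := hsub'.eq_of_length (by simp [hu'])
          exact hne (by rw [← heq, ← List.replicate_succ, h0])
      · by_cases h1 : v' = List.replicate n true
        · cases a with
          | true => exact absurd (by rw [h1]; rfl) hv1
          | false =>
            exfalso
            have hsub : v'.Sublist (false :: u') := hmem v' (List.sublist_cons_self _ _) hv'
            obtain ⟨k, rfl⟩ : ∃ k, n = k + 1 := ⟨n - 1, by omega⟩
            rw [h1, List.replicate_succ] at hsub
            have hsub' := cons_sublist_cons_of_ne hsub (by simp)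
            have heq := hsub'.eq_of_length (by simp [hu'])
            exact hne (by rw [← heq, ← List.replicate_succ, h1])
        · -- v' not constant : use induction hypothesis
          have hne' : u' ≠ v' := by intro h; exact hne (by rw [h])
          have hdom' : Dset 1 v' ⊆ Dset 1 u' := by
            intro w hw
            obtain ⟨hws, hwl⟩ := hw
            rw [hv'] at hwl
            have h1 : (a :: w).Sublist (a :: u') :=
              hmem (a :: w) (hws.cons_cons a) (by simp [hwl]; omega)
            exact ⟨List.cons_sublist_cons.mp h1, by simp [hwl, hu']⟩
          obtain ⟨p, q, m, hpq, hm1, hm2, hveq, hueq⟩ :=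
            ih u' v' hu' hv' hne' h0 h1 hdom'
          obtain ⟨k, rfl⟩ : ∃ k, m = k + 1 := ⟨m - 1, by omega⟩
          by_cases hap : a = p
          · subst hap
            refine ⟨a, q, k + 2, hpq, by omega, by omega, ?_, ?_⟩
            · have e1 : n + 1 - (k + 2) = n - (k + 1) := by omega
              rw [e1, List.replicate_succ, List.cons_append, ← hveq]
            · have e2 : k + 2 - 1 = k + 1 := by omega
              have e3 : n + 1 - (k + 2) - 1 = n - (k + 1) - 1 := by omega
              rw [e2, e3, hueq, List.replicate_succ]
              simp
          · exfalso
            have hsub : v'.Sublist (a :: u') := hmem v' (List.sublist_cons_self _ _) hv'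
            rw [hveq, List.replicate_succ, List.cons_append] at hsub
            have hsub' := cons_sublist_cons_of_ne hsub (fun h => hap h.symm)
            have heq := hsub'.eq_of_length (by
              have := congrArg List.length hveq
              simp [hv'] at this ⊢
              omega)
            apply hne
            rw [hveq]
            rw [← heq, List.replicate_succ, List.cons_append]
    · -- heads differ
      have key : ∀ w : List Bool, w.Sublist v' → w.length = n - 1 → u' = a :: w := by
        intro w hws hwl
        have h1 : (a :: w).Sublist (b :: u') :=
          hmem (a :: w) (hws.cons_cons a) (by simp [hwl]; omega)
        have h2 := cons_sublist_cons_of_ne h1 hab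
        exact (h2.eq_of_length (by simp [hwl, hu']; omega)).symm
      have e1 := key v'.tail (List.tail_sublist _) (by simp [hv'])
      have e2 := key v'.dropLast (List.dropLast_sublist _) (by simp [hv'])
      have htd : v'.tail = v'.dropLast := by
        have h3 := e1.symm.trans e2
        exact (List.cons.injEq _ _ _ _ ▸ h3).2
      obtain ⟨c, hrep⟩ : ∃ c, v' = List.replicate n c :=
        ⟨v'.headI, by rw [← hv']; exact rep_of_tail_eq_dropLast v' htd⟩
      have hca : c ≠ a := by
        intro h
        rw [h] at hrep
        cases a with
        | false => exact hv0 (by rw [hrep, ← List.replicate_succ])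
        | true => exact hv1 (by rw [hrep, ← List.replicate_succ])
      have hcb : c = b := by
        cases a <;> cases b <;> cases c <;> simp_all
      rw [hcb] at hrep
      refine ⟨a, b, 1, hab, le_refl 1, by omega, ?_, ?_⟩
      · simp only [List.replicate_one, Nat.add_sub_cancel]
        rw [hrep]
        rfl
      · have htail : v'.tail = List.replicate (n - 1) b := by
          obtain ⟨k, rfl⟩ : ∃ k, n = k + 1 := ⟨n - 1, by omega⟩
          rw [hrep, List.replicate_succ]
          simp
        rw [e1, htail]
        simp only [List.replicate_zero, List.nil_append, Nat.add_sub_cancel]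
        rfl
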